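/- Consider the switched quantized control system with parameter α satisfying 1 < α < 3/2 and disturbance rounding error Δ_d with |Δ_d| < 1/2, and suppose condition (9) holds at some time k. Then there exists k̄ ≥ k such that for all j ≥ k̄: if Δ_d > 0 then e(j) ∈ [−1/2 + Δ_d, 1/2 + Δ_d); if Δ_d < 0 then e(j) ∈ (−1/2 + Δ_d, 1/2 + Δ_d]; and if Δ_d = 0 then e(j) = e(k̄) with |e(j)| < 1/2. Consequently the quantized error ρ(e(j)) takes values only in {0, sign(Δ_d)}, i.e., its excursion in amplitude is at most 1. -/
import Mathlib


/-- Sign function: 1 for positive, 0 for zero, -1 for negative. -/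
noncomputable def rsign (z : ℝ) : ℤ :=
  if 0 < z then 1 else if z = 0 then 0 else -1

/-- Rounding operator: rounds to the nearest integer, ties away from zero. -/
noncomputable def rho (z : ℝ) : ℤ :=
  if Int.fract |z| < 1/2 then rsign z * ⌊|z|⌋ else rsign z * (⌊|z|⌋ + 1)

/-- The switched quantized control system with parameter `α` and disturbance
rounding error `Δd`, with state trajectory `(e, u)`. -/
def Traj (α Δd : ℝ) (e u : ℕ → ℝ) : Prop :=
  ∀ k : ℕ,
    e (k+1) = e k + (rho (u k) : ℝ) + Δd ∧
    u (k+1) = if rho (e (k+1)) = 0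
      then ((rho (u k) : ℝ) + (rho (e k) : ℝ))
      else (u k + (rho (e k) : ℝ) - α * (rho (e (k+1)) : ℝ))

/-- Condition (9) at time `k`. -/
def Cond9 (α Δd : ℝ) (e u : ℕ → ℝ) (k : ℕ) : Prop :=
  (-(1/2) < e k ∧ e k < 1/2) ∧
  (1 ≤ α - u k * (rsign Δd : ℝ) ∧ α - u k * (rsign Δd : ℝ) < 3/2) ∧
  (-(1/2) < u k ∧ u k < 1/2)

lemma rsign_neg' (z : ℝ) : rsign (-z) = - rsign z := by
  unfold rsign
  rcases lt_trichotomy z 0 with h | h | h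
  · rw [if_pos (by linarith), if_neg (by linarith), if_neg (ne_of_lt h)]
    norm_num
  · simp [h]
  · rw [if_neg (by linarith), if_neg (by intro hz; linarith), if_pos h]

lemma rho_neg' (z : ℝ) : rho (-z) = - rho z := by
  unfold rho
  rw [abs_neg, rsign_neg']
  split_ifs <;> ring

lemma rho_zero (z : ℝ) (h : |z| < 1/2) : rho z = 0 := by
  have h0 := abs_nonneg z
  have hf : Int.fract |z| = |z| := Int.fract_eq_self.mpr ⟨h0, by linarith⟩
  have hfl : ⌊|z|⌋ = 0 := by
    rw [Int.floor_eq_zero_iff]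
    exact ⟨h0, by linarith⟩
  unfold rho
  rw [hf, if_pos (by linarith), hfl, mul_zero]

lemma rho_one (z : ℝ) (h1 : 1/2 ≤ z) (h2 : z < 3/2) : rho z = 1 := by
  have hz : 0 < z := by linarith
  have habs : |z| = z := abs_of_pos hz
  unfold rho rsign
  rw [habs, if_pos hz]
  by_cases hc : z < 1
  · have hf : Int.fract z = z := Int.fract_eq_self.mpr ⟨by linarith, hc⟩
    have hfl : ⌊z⌋ = 0 := by
      rw [Int.floor_eq_zero_iff]
      exact ⟨by linarith, hc⟩
    rw [hf, if_neg (by linarith), hfl]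
    norm_num
  · push_neg at hc
    have hfl : ⌊z⌋ = 1 := by
      rw [Int.floor_eq_iff]
      push_cast
      exact ⟨hc, by linarith⟩
    have hf : Int.fract z = z - 1 := by
      rw [Int.fract, hfl]
      norm_num
    rw [hf, if_pos (by linarith), hfl]
    norm_num

lemma rho_neg_one (z : ℝ) (h1 : -(3/2) < z) (h2 : z ≤ -(1/2)) : rho z = -1 := by
  have h := rho_neg' (-z)
  rw [neg_neg] at h
  rw [h, rho_one (-z) (by linarith) (by linarith)]

lemma aux_pos (α Δd : ℝ) (hα1 : 1 < α) (hα2 : α < 3/2)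
    (hΔ1 : 0 < Δd) (hΔ2 : Δd < 1/2)
    (e u : ℕ → ℝ) (htraj : Traj α Δd e u) (k : ℕ)
    (he1 : -(1/2) < e k) (he2 : e k < 1/2)
    (hc1 : 1 ≤ α - u k) (hc2 : α - u k < 3/2)
    (hu1 : -(1/2) < u k) (hu2 : u k < 1/2) :
    ∀ j, k + 1 ≤ j →
      (-(1/2) + Δd ≤ e j ∧ e j < 1/2 + Δd ∧ (rho (e j) = 0 ∨ rho (e j) = 1)) := by
  have main : ∀ n : ℕ,
      ((-(1/2) + Δd ≤ e (k+1+n) ∧ e (k+1+n) < 1/2 ∧ u (k+1+n) = 0) ∨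
       (1/2 ≤ e (k+1+n) ∧ e (k+1+n) < 1/2 + Δd ∧
        -(3/2) < u (k+1+n) ∧ u (k+1+n) ≤ -(1/2))) := by
    intro n
    induction n with
    | zero =>
      obtain ⟨he, hu⟩ := htraj k
      have hru : rho (u k) = 0 := rho_zero _ (abs_lt.mpr ⟨hu1, hu2⟩)
      have hre : rho (e k) = 0 := rho_zero _ (abs_lt.mpr ⟨he1, he2⟩)
      rw [hru] at he
      push_cast at he
      by_cases hcase : e (k+1) < 1/2
      · left
        have hre1 : rho (e (k+1)) = 0 := rho_zero _ (abs_lt.mpr ⟨by linarith, hcase⟩)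
        rw [if_pos hre1, hru, hre] at hu
        push_cast at hu
        exact ⟨by linarith, hcase, by linarith⟩
      · right
        push_neg at hcase
        have hre1 : rho (e (k+1)) = 1 := rho_one _ hcase (by linarith)
        rw [if_neg (by rw [hre1]; norm_num), hre, hre1] at hu
        push_cast at hu
        exact ⟨hcase, by linarith, by linarith, by linarith⟩
    | succ n ih =>
      have heq : k + 1 + (n+1) = (k+1+n) + 1 := rfl
      rw [heq]
      set j := k + 1 + n with hj
      obtain ⟨he, hu⟩ := htraj j
      rcases ih with ⟨h1, h2, h3⟩ | ⟨h1, h2, h3, h4⟩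
      · -- Low state
        have hru : rho (u j) = 0 := by
          rw [h3]; exact rho_zero _ (by norm_num)
        have hre : rho (e j) = 0 := rho_zero _ (abs_lt.mpr ⟨by linarith, h2⟩)
        rw [hru] at he
        push_cast at he
        by_cases hcase : e (j+1) < 1/2
        · left
          have hre1 : rho (e (j+1)) = 0 := rho_zero _ (abs_lt.mpr ⟨by linarith, hcase⟩)
          rw [if_pos hre1, hru, hre] at hu
          push_cast at hu
          exact ⟨by linarith, hcase, by linarith⟩
        · right
          push_neg at hcase
          have hre1 : rho (e (j+1)) = 1 := rho_one _ hcase (by linarith)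
          rw [if_neg (by rw [hre1]; norm_num), hre, hre1] at hu
          push_cast at hu
          exact ⟨hcase, by linarith, by linarith, by linarith⟩
      · -- High state
        have hru : rho (u j) = -1 := rho_neg_one _ h3 h4
        have hre : rho (e j) = 1 := rho_one _ h1 (by linarith)
        rw [hru] at he
        push_cast at he
        left
        have hre1 : rho (e (j+1)) = 0 :=
          rho_zero _ (abs_lt.mpr ⟨by linarith, by linarith⟩)
        rw [if_pos hre1, hru, hre] at hu
        push_cast at hu
        exact ⟨by linarith, by linarith, by linarith⟩
  intro j hj
  obtain ⟨n, rfl⟩ : ∃ n, j = k + 1 + n := ⟨j - (k+1), by omega⟩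
  rcases main n with ⟨h1, h2, h3⟩ | ⟨h1, h2, h3, h4⟩
  · exact ⟨h1, by linarith, Or.inl (rho_zero _ (abs_lt.mpr ⟨by linarith, h2⟩))⟩
  · exact ⟨by linarith, h2, Or.inr (rho_one _ h1 (by linarith))⟩

theorem stmt_6 (α Δd : ℝ) (hα : 1 < α ∧ α < 3/2) (hΔ : |Δd| < 1/2)
    (e u : ℕ → ℝ) (htraj : Traj α Δd e u) (k : ℕ) (h9 : Cond9 α Δd e u k) :
    ∃ kb : ℕ, k ≤ kb ∧ ∀ j : ℕ, kb ≤ j →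
      (0 < Δd → e j ∈ Set.Ico (-(1/2) + Δd) (1/2 + Δd)) ∧
      (Δd < 0 → e j ∈ Set.Ioc (-(1/2) + Δd) (1/2 + Δd)) ∧
      (Δd = 0 → e j = e kb ∧ |e j| < 1/2) ∧
      (rho (e j) = 0 ∨ rho (e j) = rsign Δd) := by
  obtain ⟨hα1, hα2⟩ := hα
  obtain ⟨⟨he1, he2⟩, ⟨hc1, hc2⟩, ⟨hu1, hu2⟩⟩ := h9
  obtain ⟨hΔlo, hΔhi⟩ := abs_lt.mp hΔ
  rcases lt_trichotomy Δd 0 with hneg | hzero | hpos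
  · -- Δd < 0 : use the symmetric trajectory
    have hsgn : rsign Δd = -1 := by
      unfold rsign
      rw [if_neg (by linarith), if_neg (ne_of_lt hneg)]
    rw [hsgn] at hc1 hc2
    push_cast at hc1 hc2
    have htraj' : Traj α (-Δd) (fun j => -(e j)) (fun j => -(u j)) := by
      intro m
      obtain ⟨he, hu⟩ := htraj m
      refine ⟨?_, ?_⟩
      · show -(e (m+1)) = -(e m) + ((rho (-(u m)) : ℤ) : ℝ) + (-Δd)
        rw [rho_neg']
        push_cast
        linarith
      · show -(u (m+1)) = if rho (-(e (m+1))) = 0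
            then (((rho (-(u m)) : ℤ) : ℝ) + ((rho (-(e m)) : ℤ) : ℝ))
            else (-(u m) + ((rho (-(e m)) : ℤ) : ℝ) - α * ((rho (-(e (m+1))) : ℤ) : ℝ))
        rw [rho_neg', rho_neg', rho_neg']
        by_cases hz : rho (e (m+1)) = 0
        · rw [if_pos (neg_eq_zero.mpr hz)]
          rw [if_pos hz] at hu
          push_cast
          linarith
        · rw [if_neg (by simpa using hz)]
          rw [if_neg hz] at hu
          push_cast
          linarith
    have h' := aux_pos α (-Δd) hα1 hα2 (by linarith) (by linarith)
      _ _ htraj' k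
      (show -(1/2) < -(e k) by linarith)
      (show -(e k) < 1/2 by linarith)
      (show (1:ℝ) ≤ α - -(u k) by linarith)
      (show α - -(u k) < 3/2 by linarith)
      (show -(1/2) < -(u k) by linarith)
      (show -(u k) < 1/2 by linarith)
    refine ⟨k+1, by omega, fun j hj => ?_⟩
    obtain ⟨g1, g2, g3⟩ := h' j hj
    have g1' : -(1/2) + -Δd ≤ -(e j) := g1
    have g2' : -(e j) < 1/2 + -Δd := g2
    have g3' : rho (-(e j)) = 0 ∨ rho (-(e j)) = 1 := g3
    have hrn := rho_neg' (e j)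
    refine ⟨fun h => absurd h (by linarith), fun _ => ?_, fun h => absurd h (ne_of_lt hneg), ?_⟩
    · exact Set.mem_Ioc.mpr ⟨by linarith, by linarith⟩
    · rw [hsgn]
      rcases g3' with h | h <;> rw [hrn] at h
      · left; omega
      · right; omega
  · -- Δd = 0
    refine ⟨k, le_refl k, ?_⟩
    have main : ∀ n, e (k+n) = e k ∧ |e (k+n)| < 1/2 ∧ |u (k+n)| < 1/2 := by
      intro n
      induction n with
      | zero => exact ⟨rfl, abs_lt.mpr ⟨he1, he2⟩, abs_lt.mpr ⟨hu1, hu2⟩⟩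
      | succ n ih =>
        obtain ⟨ih1, ih2, ih3⟩ := ih
        obtain ⟨he, hu⟩ := htraj (k+n)
        have hru : rho (u (k+n)) = 0 := rho_zero _ ih3
        have hre : rho (e (k+n)) = 0 := rho_zero _ ih2
        rw [hru, hzero] at he
        push_cast at he
        have heq : e (k+n+1) = e k := by rw [he, ih1]; ring
        have hre1 : rho (e (k+n+1)) = 0 := by
          rw [heq]; exact rho_zero _ (abs_lt.mpr ⟨he1, he2⟩)
        rw [if_pos hre1, hru, hre] at hu
        push_cast at hu
        have heq2 : k + (n+1) = k + n + 1 := rfl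
        rw [heq2]
        refine ⟨heq, by rw [heq]; exact abs_lt.mpr ⟨he1, he2⟩, by rw [hu]; norm_num⟩
    intro j hj
    obtain ⟨n, rfl⟩ : ∃ n, j = k + n := ⟨j - k, by omega⟩
    obtain ⟨g1, g2, _⟩ := main n
    refine ⟨fun h => absurd h (by rw [hzero]; norm_num),
            fun h => absurd h (by rw [hzero]; norm_num),
            fun _ => ⟨g1, g2⟩, Or.inl (rho_zero _ g2)⟩
  · -- Δd > 0
    have hsgn : rsign Δd = 1 := by unfold rsign; rw [if_pos hpos]
    rw [hsgn] at hc1 hc2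
    push_cast at hc1 hc2
    have h' := aux_pos α Δd hα1 hα2 hpos hΔhi e u htraj k he1 he2
      (by linarith) (by linarith) hu1 hu2
    refine ⟨k+1, by omega, fun j hj => ?_⟩
    obtain ⟨g1, g2, g3⟩ := h' j hj
    refine ⟨fun _ => Set.mem_Ico.mpr ⟨g1, g2⟩,
            fun h => absurd h (by linarith),
            fun h => absurd h (ne_of_gt hpos), ?_⟩
    rw [hsgn]
    exact g3
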